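/- Let agents have {−1,0,c}-additive valuations (each agent i assigns each item a value in {−1,0,c} and values bundles additively, c a positive integer). Let X be a leximin allocation with decomposition X = X^c ∪ X^0 ∪ X^{−1} (where X^c_i, X^0_i, X^{−1}_i are the items in X_i that i values at c, 0, −1 respectively). Then for any two agents i, j with |X^{−1}_i| > 0, c·|X^c_i| − |X^{−1}_i| + 1 ≥ c·|X^c_j| − |X^{−1}_j|. -/

import Mathlib

open Finset

/-- Additive utility of a bundle given per-item values. -/
def util {α : Type*} [DecidableEq α] (w : α → ℤ) (S : Finset α) : ℤ := ∑ o ∈ S, w o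

/-- A complete allocation: bundles are pairwise disjoint and cover all items. -/
def CompleteAlloc {α : Type*} [Fintype α] [DecidableEq α] {n : ℕ}
    (X : Fin n → Finset α) : Prop :=
  (∀ i j : Fin n, i ≠ j → Disjoint (X i) (X j)) ∧ Finset.univ.biUnion X = Finset.univ

/-- The ascending-sorted utility vector of an allocation. -/
noncomputable def sUtil {α : Type*} [Fintype α] [DecidableEq α] {n : ℕ}
    (value : Fin n → α → ℤ) (X : Fin n → Finset α) : List ℤ :=
  Multiset.sort (Multiset.map (fun i => util (value i) (X i)) Finset.univ.val) (· ≤ ·)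

/-- A leximin allocation: a complete allocation whose sorted utility vector is not
lexicographically dominated by that of any other complete allocation. -/
def Leximin {α : Type*} [Fintype α] [DecidableEq α] {n : ℕ}
    (value : Fin n → α → ℤ) (X : Fin n → Finset α) : Prop :=
  CompleteAlloc X ∧ ∀ Y : Fin n → Finset α, CompleteAlloc Y →
    ¬ List.Lex (· < ·) (sUtil value X) (sUtil value Y)

/-- Auxiliary: if `z` is strictly below the head of a `≤`-sorted list, it does not occur. -/
lemma count_zero_of_sorted_lt {z w : ℤ} {t : List ℤ}
    (hs : List.Pairwise (· ≤ ·) (w :: t)) (h : z < w) : (w :: t).count z = 0 := by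
  rw [List.count_eq_zero]
  intro hmem
  rcases List.mem_cons.mp hmem with rfl | hm
  · exact absurd h (lt_irrefl _)
  · exact absurd ((List.pairwise_cons.mp hs).1 z hm) (not_le.mpr h)

/-- Auxiliary: a sorted list with strictly more copies of `a`, but identical counts
below `a`, is lexicographically smaller. -/
lemma lex_of_count (a : ℤ) : ∀ (l₁ l₂ : List ℤ), List.Pairwise (· ≤ ·) l₁ →
    List.Pairwise (· ≤ ·) l₂ → l₁.length = l₂.length →
    (∀ v, v < a → l₁.count v = l₂.count v) →
    l₂.count a < l₁.count a → List.Lex (· < ·) l₁ l₂ := by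
  intro l₁
  induction l₁ with
  | nil => intro l₂ _ _ _ _ hcnt; simp at hcnt
  | cons x t₁ ih =>
    intro l₂ h₁ h₂ hlen hlt hcnt
    match l₂ with
    | [] => simp at hlen
    | y :: t₂ =>
      rcases lt_trichotomy x y with h | h | h
      · exact List.Lex.rel h
      · subst h
        apply List.Lex.cons
        apply ih t₂ (List.pairwise_cons.mp h₁).2 (List.pairwise_cons.mp h₂).2
          (by simpa using hlen)
        · intro v hv
          have := hlt v hv
          by_cases hvx : v = x <;> simp [List.count_cons, hvx] at this ⊢ <;> omega
        · by_cases hax : a = x <;> simp [List.count_cons, hax] at hcnt ⊢ <;> omega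
      · exfalso
        by_cases hy : y < a
        · have h1 : 1 ≤ (y :: t₂).count y := by simp [List.count_cons]
          have h2 : (x :: t₁).count y = 0 := count_zero_of_sorted_lt h₁ h
          have := hlt y hy
          omega
        · have hxa : a < x := lt_of_le_of_lt (not_lt.mp hy) h
          have h2 : (x :: t₁).count a = 0 := count_zero_of_sorted_lt h₁ hxa
          omega

/-- Auxiliary: utilities decompose via the `c`-items and the `(-1)`-items. -/
lemma util_decomp {α : Type*} [DecidableEq α] (c : ℕ) (hc : 0 < c) (w : α → ℤ)
    (hw : ∀ o, w o ∈ ({-1, 0, (c : ℤ)} : Set ℤ)) (S : Finset α) :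
    util w S = (c : ℤ) * (S.filter (fun o => w o = c)).card
      - (S.filter (fun o => w o = -1)).card := by
  classical
  induction S using Finset.induction with
  | empty => simp [util]
  | @insert o S hoS ih =>
    have hmem := hw o
    simp only [Set.mem_insert_iff, Set.mem_singleton_iff] at hmem
    have hins : util w (insert o S) = w o + util w S := Finset.sum_insert hoS
    have hcne : ((c : ℤ)) ≠ -1 := by omega
    have hcz : ((c : ℤ)) ≠ 0 := by omega
    rcases hmem with h | h | h
    · rw [hins, ih, Finset.filter_insert, Finset.filter_insert]
      rw [if_neg (by rw [h]; exact fun hh => hcne hh.symm), if_pos h]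
      rw [Finset.card_insert_of_notMem (fun hh => hoS (Finset.mem_filter.mp hh).1)]
      push_cast
      linarith
    · rw [hins, ih, Finset.filter_insert, Finset.filter_insert]
      rw [if_neg (by rw [h]; exact fun hh => hcz hh.symm),
        if_neg (by rw [h]; norm_num)]
      linarith
    · rw [hins, ih, Finset.filter_insert, Finset.filter_insert]
      rw [if_pos h, if_neg (by rw [h]; exact hcne)]
      rw [Finset.card_insert_of_notMem (fun hh => hoS (Finset.mem_filter.mp hh).1)]
      push_cast
      linarith

/-- with `{-1, 0, c}`-additive valuations, in any leximin allocation `X`,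
for agents `i, j` with `|X^{-1}_i| > 0` we have
`c·|X^c_i| - |X^{-1}_i| + 1 ≥ c·|X^c_j| - |X^{-1}_j|`. -/
theorem leximin_chore_balance {α : Type*} [Fintype α] [DecidableEq α]
    (n : ℕ) (c : ℕ) (hc : 0 < c) (value : Fin n → α → ℤ)
    (hval : ∀ i o, value i o ∈ ({-1, 0, (c : ℤ)} : Set ℤ))
    (X : Fin n → Finset α) (hlex : Leximin value X) :
    ∀ i j : Fin n,
      0 < ((X i).filter (fun o => value i o = -1)).card →
      (c : ℤ) * ((X j).filter (fun o => value j o = c)).card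
        - ((X j).filter (fun o => value j o = -1)).card ≤
      (c : ℤ) * ((X i).filter (fun o => value i o = c)).card
        - ((X i).filter (fun o => value i o = -1)).card + 1 := by
  classical
  intro i j hi
  by_cases hij : i = j
  · subst hij; linarith
  by_contra hcon
  push_neg at hcon
  -- rewrite in terms of util
  have hui : util (value i) (X i) = (c : ℤ) * ((X i).filter (fun o => value i o = c)).card
      - ((X i).filter (fun o => value i o = -1)).card := util_decomp c hc _ (hval i) _
  have huj : util (value j) (X j) = (c : ℤ) * ((X j).filter (fun o => value j o = c)).card
      - ((X j).filter (fun o => value j o = -1)).card := util_decomp c hc _ (hval j) _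
  have hgap : util (value i) (X i) + 1 < util (value j) (X j) := by
    rw [hui, huj]; linarith
  -- pick a chore of agent i
  obtain ⟨o, ho⟩ := Finset.card_pos.mp hi
  have homem : o ∈ X i := (Finset.mem_filter.mp ho).1
  have hov : value i o = -1 := (Finset.mem_filter.mp ho).2
  obtain ⟨hdisj, hcover⟩ := hlex.1
  have hXmem : ∀ k l (a : α), a ∈ X k → a ∈ X l → k = l := by
    intro k l a hk hl
    by_contra hkl
    exact (Finset.disjoint_left.mp (hdisj k l hkl)) hk hl
  have honj : o ∉ X j := fun h => hij (hXmem i j o homem h)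
  -- the swapped allocation
  set Y : Fin n → Finset α := fun k =>
    if k = i then (X i).erase o else if k = j then insert o (X j) else X k with hY
  have hYi : Y i = (X i).erase o := by simp [hY]
  have hYj : Y j = insert o (X j) := by simp [hY, Ne.symm hij]
  have hYk : ∀ k, k ≠ i → k ≠ j → Y k = X k := by intro k h1 h2; simp [hY, h1, h2]
  have hYsub : ∀ k (a : α), a ∈ Y k → a ∈ X k ∨ (k = j ∧ a = o) := by
    intro k a hk
    by_cases h1 : k = i
    · subst h1; rw [hYi] at hk; exact Or.inl (Finset.mem_of_mem_erase hk)
    by_cases h2 : k = j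
    · subst h2; rw [hYj] at hk
      rcases Finset.mem_insert.mp hk with rfl | h
      · exact Or.inr ⟨rfl, rfl⟩
      · exact Or.inl h
    · rw [hYk k h1 h2] at hk; exact Or.inl hk
  have hYC : CompleteAlloc Y := by
    constructor
    · intro k l hkl
      rw [Finset.disjoint_left]
      intro a hak hal
      rcases hYsub k a hak with hk | ⟨hkj, hao⟩
      · rcases hYsub l a hal with hl | ⟨hlj, hao⟩
        · exact hkl (hXmem k l a hk hl)
        · -- a = o ∈ X k and l = j ; but o ∈ X i so k = i, and Y i = erase o
          have hki : k = i := hXmem k i a hk (hao ▸ homem)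
          rw [hki, hYi] at hak
          exact (Finset.mem_erase.mp hak).1 hao
      · rcases hYsub l a hal with hl | ⟨hlj, hao'⟩
        · have hli : l = i := hXmem l i a hl (hao ▸ homem)
          rw [hli, hYi] at hal
          exact (Finset.mem_erase.mp hal).1 hao
        · exact hkl (hkj.trans hlj.symm)
    · apply Finset.eq_univ_of_forall
      intro a
      have haX : a ∈ Finset.univ.biUnion X := by rw [hcover]; exact Finset.mem_univ a
      obtain ⟨k, -, hk⟩ := Finset.mem_biUnion.mp haX
      rw [Finset.mem_biUnion]
      by_cases h1 : k = i
      · rw [h1] at hk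
        by_cases hao : a = o
        · exact ⟨j, Finset.mem_univ j, by rw [hYj, hao]; exact Finset.mem_insert_self _ _⟩
        · exact ⟨i, Finset.mem_univ i, by rw [hYi]; exact Finset.mem_erase.mpr ⟨hao, hk⟩⟩
      by_cases h2 : k = j
      · rw [h2] at hk
        exact ⟨j, Finset.mem_univ j, by rw [hYj]; exact Finset.mem_insert_of_mem hk⟩
      · exact ⟨k, Finset.mem_univ k, by rw [hYk k h1 h2]; exact hk⟩
  -- utilities of Y
  have hui' : util (value i) (Y i) = util (value i) (X i) + 1 := by
    rw [hYi]
    unfold util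
    rw [Finset.sum_erase_eq_sub homem, hov]
    ring
  have huj' : util (value j) (Y j) = value j o + util (value j) (X j) := by
    rw [hYj]
    unfold util
    exact Finset.sum_insert honj
  have hvjo : -1 ≤ value j o := by
    have := hval j o
    simp only [Set.mem_insert_iff, Set.mem_singleton_iff] at this
    rcases this with h | h | h <;> rw [h] <;> linarith [Int.natCast_nonneg c]
  -- multiset structure
  set f : Fin n → ℤ := fun k => util (value k) (X k) with hf
  set g : Fin n → ℤ := fun k => util (value k) (Y k) with hg
  have hiu : i ∈ (Finset.univ.val : Multiset (Fin n)) := Finset.mem_univ i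
  have hju : j ∈ (Finset.univ.val : Multiset (Fin n)).erase i :=
    (Multiset.mem_erase_of_ne (fun h => hij h.symm)).mpr (Finset.mem_univ j)
  set R : Multiset (Fin n) := ((Finset.univ.val : Multiset (Fin n)).erase i).erase j with hR
  have huniv : (Finset.univ.val : Multiset (Fin n)) = i ::ₘ j ::ₘ R := by
    rw [hR, Multiset.cons_erase hju, Multiset.cons_erase hiu]
  have hnd0 : (Finset.univ.val : Multiset (Fin n)).Nodup := Finset.univ.nodup
  have hnd1 : ((Finset.univ.val : Multiset (Fin n)).erase i).Nodup := hnd0.erase i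
  have hgfR : Multiset.map g R = Multiset.map f R := by
    apply Multiset.map_congr rfl
    intro k hk
    rw [hR] at hk
    have hkj : k ≠ j := (hnd1.mem_erase_iff.mp hk).1
    have hk2 : k ∈ (Finset.univ.val : Multiset (Fin n)).erase i :=
      (hnd1.mem_erase_iff.mp hk).2
    have hki : k ≠ i := (hnd0.mem_erase_iff.mp hk2).1
    rw [hg, hf]
    simp only
    rw [hYk k hki hkj]
  have hMX : Multiset.map f Finset.univ.val = f i ::ₘ f j ::ₘ Multiset.map f R := by
    rw [huniv]; simp
  have hMY : Multiset.map g Finset.univ.val = g i ::ₘ g j ::ₘ Multiset.map f R := by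
    rw [huniv]; simp [hgfR]
  -- key inequalities
  have hfgi : g i = f i + 1 := hui'
  have hgj : f i + 1 ≤ g j := by
    have : g j = value j o + f j := huj'
    rw [this, hf]
    simp only
    linarith [hgap]
  have hfj : f i + 1 < f j := hgap
  -- apply the lex lemma
  have hlexlt : List.Lex (· < ·) (sUtil value X) (sUtil value Y) := by
    unfold sUtil
    apply lex_of_count (f i)
    · exact Multiset.pairwise_sort _ _
    · exact Multiset.pairwise_sort _ _
    · rw [Multiset.length_sort, Multiset.length_sort]
      simp
    · intro v hv
      have e1 : (Multiset.sort (Multiset.map f Finset.univ.val) (· ≤ ·)).count v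
          = Multiset.count v (Multiset.map f Finset.univ.val) := by
        rw [← Multiset.coe_count, Multiset.sort_eq]
      have e2 : (Multiset.sort (Multiset.map g Finset.univ.val) (· ≤ ·)).count v
          = Multiset.count v (Multiset.map g Finset.univ.val) := by
        rw [← Multiset.coe_count, Multiset.sort_eq]
      rw [e1, e2, hMX, hMY]
      simp only [Multiset.count_cons]
      have h1 : v ≠ f i := ne_of_lt hv
      have h2 : v ≠ f j := by intro h; rw [h] at hv; linarith
      have h3 : v ≠ g i := by intro h; rw [h, hfgi] at hv; linarith
      have h4 : v ≠ g j := by intro h; rw [h] at hv; linarith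
      simp [h1, h2, h3, h4]
    · have e1 : (Multiset.sort (Multiset.map f Finset.univ.val) (· ≤ ·)).count (f i)
          = Multiset.count (f i) (Multiset.map f Finset.univ.val) := by
        rw [← Multiset.coe_count, Multiset.sort_eq]
      have e2 : (Multiset.sort (Multiset.map g Finset.univ.val) (· ≤ ·)).count (f i)
          = Multiset.count (f i) (Multiset.map g Finset.univ.val) := by
        rw [← Multiset.coe_count, Multiset.sort_eq]
      rw [e1, e2, hMX, hMY]
      simp only [Multiset.count_cons]
      have h2 : f i ≠ f j := by linarith
      have h3 : f i ≠ g i := by rw [hfgi]; linarith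
      have h4 : f i ≠ g j := by linarith
      simp [h2, h3, h4]
  exact hlex.2 Y hYC hlexlt
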